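/- In the lumped drug model with consumption, d/dt c(t) = K·(c_v − c(t)) − g(t, c(t)) where K > 0, c_v > 0, and g is continuous with 0 ≤ g(t, x) whenever x ≥ 0 and g(t, 0) = 0, any solution with c(0) = 0 satisfies 0 ≤ c(t) ≤ c_v·(1 − exp(−K·t)) ≤ c_v for all t ≥ 0. -/

import Mathlib

theorem drug_model_comparison (K c_v : ℝ) (hK : 0 < K) (hcv : 0 < c_v)
    (g : ℝ → ℝ → ℝ) (hg : Continuous (fun p : ℝ × ℝ => g p.1 p.2))
    (hg0 : ∀ t : ℝ, g t 0 = 0) (hgpos : ∀ t x : ℝ, 0 ≤ x → 0 ≤ g t x)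
    (c : ℝ → ℝ) (hc0 : c 0 = 0)
    (hderiv : ∀ t : ℝ, 0 ≤ t → HasDerivAt c (K * (c_v - c t) - g t (c t)) t) :
    ∀ t : ℝ, 0 ≤ t →
      0 ≤ c t ∧ c t ≤ c_v * (1 - Real.exp (-K * t)) ∧
      c_v * (1 - Real.exp (-K * t)) ≤ c_v := by
  have hcont : ∀ t : ℝ, 0 ≤ t → ContinuousAt c t := fun t ht => (hderiv t ht).continuousAt
  -- Step 1: nonnegativity
  have hpos : ∀ t : ℝ, 0 ≤ t → 0 ≤ c t := by
    by_contra h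
    push_neg at h
    obtain ⟨t₀, ht₀, hct₀⟩ := h
    have ht₀pos : 0 < t₀ := by
      rcases lt_or_eq_of_le ht₀ with h' | h'
      · exact h'
      · exfalso; rw [← h', hc0] at hct₀; exact lt_irrefl 0 hct₀
    set A : Set ℝ := Set.Icc 0 t₀ ∩ c ⁻¹' Set.Ici 0 with hA
    have hcOn : ContinuousOn c (Set.Icc 0 t₀) :=
      fun x hx => (hcont x hx.1).continuousWithinAt
    have hAclosed : IsClosed A :=
      hcOn.preimage_isClosed_of_isClosed isClosed_Icc isClosed_Ici
    have h0A : (0 : ℝ) ∈ A := ⟨⟨le_refl 0, ht₀⟩, by simp [hc0]⟩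
    have hAbdd : BddAbove A := ⟨t₀, fun x hx => hx.1.2⟩
    set s := sSup A with hs
    have hsA : s ∈ A := hAclosed.csSup_mem ⟨0, h0A⟩ hAbdd
    have hs0 : 0 ≤ s := hsA.1.1
    have hst₀ : s < t₀ := by
      rcases lt_or_eq_of_le hsA.1.2 with h' | h'
      · exact h'
      · exfalso; have := hsA.2; rw [h'] at this; exact absurd hct₀ (not_lt.mpr this)
    have hneg : ∀ t, s < t → t ≤ t₀ → c t < 0 := by
      intro t hst htt₀
      by_contra h'
      push_neg at h'
      have : t ∈ A := ⟨⟨le_trans hs0 hst.le, htt₀⟩, h'⟩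
      exact absurd (le_csSup hAbdd this) (not_le.mpr hst)
    -- c s = 0
    have hcs_le : c s ≤ 0 := by
      have htend : Filter.Tendsto c (nhdsWithin s (Set.Ioi s)) (nhds (c s)) :=
        ((hcont s hs0).tendsto).mono_left nhdsWithin_le_nhds
      have hev : ∀ᶠ t in nhdsWithin s (Set.Ioi s), c t ≤ 0 := by
        have h1 : ∀ᶠ t in nhdsWithin s (Set.Ioi s), t < t₀ :=
          nhdsWithin_le_nhds (Filter.Tendsto.eventually_lt_const hst₀ Filter.tendsto_id)
        filter_upwards [h1, self_mem_nhdsWithin] with t h1t h2t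
        exact (hneg t h2t h1t.le).le
      exact le_of_tendsto htend hev
    have hcs : c s = 0 := le_antisymm hcs_le hsA.2
    -- derivative at s is K * c_v > 0
    have hd : HasDerivAt c (K * c_v) s := by
      have := hderiv s hs0
      rwa [hcs, hg0, sub_zero, sub_zero] at this
    have hslope : Filter.Tendsto (slope c s) (nhdsWithin s {s}ᶜ) (nhds (K * c_v)) :=
      hasDerivAt_iff_tendsto_slope.mp hd
    have hKcv : 0 < K * c_v := mul_pos hK hcv
    have hev1 : ∀ᶠ t in nhdsWithin s {s}ᶜ, 0 < slope c s t :=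
      hslope.eventually (eventually_gt_nhds hKcv)
    have hev1' : ∀ᶠ t in nhdsWithin s (Set.Ioi s), 0 < slope c s t :=
      hev1.filter_mono (nhdsWithin_mono s (fun x hx => ne_of_gt hx))
    have hev2 : ∀ᶠ t in nhdsWithin s (Set.Ioi s), c t < 0 := by
      have h1 : ∀ᶠ t in nhdsWithin s (Set.Ioi s), t < t₀ :=
        nhdsWithin_le_nhds (Filter.Tendsto.eventually_lt_const hst₀ Filter.tendsto_id)
      filter_upwards [h1, self_mem_nhdsWithin] with t h1t h2t
      exact hneg t h2t h1t.le
    obtain ⟨t, h1t, h2t, h3t⟩ := (hev1'.and (hev2.and self_mem_nhdsWithin)).exists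
    have : 0 < c t := by
      have hts : 0 < t - s := sub_pos.mpr h3t
      have := mul_pos h1t hts
      rw [slope_def_field] at this
      have : (c t - c s) = (c t - c s) / (t - s) * (t - s) := by
        field_simp
      nlinarith [mul_pos h1t hts, div_mul_cancel₀ (c t - c s) (ne_of_gt hts)]
    linarith
  -- Step 2: upper bound via v(t) = e^{Kt}(u(t) - c(t))
  set v : ℝ → ℝ := fun t => Real.exp (K * t) * (c_v * (1 - Real.exp (-K * t)) - c t)
    with hvdef
  have hv : ∀ t : ℝ, 0 ≤ t → HasDerivAt v (Real.exp (K * t) * g t (c t)) t := by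
    intro t ht
    have h1 : HasDerivAt (fun t : ℝ => Real.exp (K * t)) (Real.exp (K * t) * K) t := by
      simpa using ((hasDerivAt_id t).const_mul K).exp
    have h2 : HasDerivAt (fun t : ℝ => Real.exp (-K * t)) (Real.exp (-K * t) * (-K)) t := by
      simpa using ((hasDerivAt_id t).const_mul (-K)).exp
    have h3 : HasDerivAt (fun t : ℝ => c_v * (1 - Real.exp (-K * t)) - c t)
        (c_v * (0 - Real.exp (-K * t) * (-K)) - (K * (c_v - c t) - g t (c t))) t :=
      (((hasDerivAt_const t (1 : ℝ)).sub h2).const_mul c_v).sub (hderiv t ht)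
    have h4 := h1.mul h3
    have hexp : Real.exp (K * t) * Real.exp (-K * t) = 1 := by
      rw [← Real.exp_add]; ring_nf; exact Real.exp_zero
    exact h4.congr_deriv (by ring)

  have hv0 : v 0 = 0 := by simp [hvdef, hc0]
  have hmono : MonotoneOn v (Set.Ici (0 : ℝ)) := by
    apply monotoneOn_of_deriv_nonneg (convex_Ici 0)
    · exact fun x hx => (hv x hx).continuousAt.continuousWithinAt
    · rw [interior_Ici]
      exact fun x hx => ((hv x (le_of_lt hx)).differentiableAt).differentiableWithinAt
    · rw [interior_Ici]
      intro x hx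
      rw [(hv x (le_of_lt hx)).deriv]
      exact mul_nonneg (Real.exp_nonneg _) (hgpos x _ (hpos x (le_of_lt hx)))
  intro t ht
  refine ⟨hpos t ht, ?_, ?_⟩
  · have := hmono (Set.self_mem_Ici) (Set.mem_Ici.mpr ht) ht
    rw [hv0] at this
    have hexppos := Real.exp_pos (K * t)
    simp only [hvdef] at this
    nlinarith
  · have := Real.exp_pos (-K * t)
    nlinarith
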